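/- For any pairwise distinct complex numbers $h_1, h_2, h_3, h_4, h_5$, the expression $\sum_{1 \leq i < j \leq 5} \frac{\prod_{a=0}^{2}(a h_i + (2-a) h_j) \cdot \left(\sum_{k \neq i,j} h_k\right)^{3}}{\prod_{k \neq i,j}(h_i - h_k)(h_j - h_k)}$ is independent of $h_1,\dots,h_5$, and its value times $(-1)^3$ is an integer. -/

import Mathlib

open Finset
set_option maxHeartbeats 2000000 in
theorem fano_degree_d2_n4_constant_integer :
    ∃ c : ℤ, ∀ h : Fin 5 → ℂ, Function.Injective h →
      ((-1 : ℂ) ^ 3 * ∑ i : Fin 5, ∑ j : Fin 5,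
        if i < j then
          (∏ a ∈ Finset.range 3, ((a : ℂ) * h i + ((2 - a : ℕ) : ℂ) * h j)) *
            (∑ k ∈ Finset.univ \ {i, j}, h k) ^ 3 /
            ∏ k ∈ Finset.univ \ {i, j}, ((h i - h k) * (h j - h k))
        else 0) = (c : ℂ) := by
  use 8
  intro h hinj
  have n01 : h 0 - h 1 ≠ 0 := sub_ne_zero.mpr (fun e => absurd (hinj e) (by decide))
  have n02 : h 0 - h 2 ≠ 0 := sub_ne_zero.mpr (fun e => absurd (hinj e) (by decide))
  have n03 : h 0 - h 3 ≠ 0 := sub_ne_zero.mpr (fun e => absurd (hinj e) (by decide))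
  have n04 : h 0 - h 4 ≠ 0 := sub_ne_zero.mpr (fun e => absurd (hinj e) (by decide))
  have n12 : h 1 - h 2 ≠ 0 := sub_ne_zero.mpr (fun e => absurd (hinj e) (by decide))
  have n13 : h 1 - h 3 ≠ 0 := sub_ne_zero.mpr (fun e => absurd (hinj e) (by decide))
  have n14 : h 1 - h 4 ≠ 0 := sub_ne_zero.mpr (fun e => absurd (hinj e) (by decide))
  have n23 : h 2 - h 3 ≠ 0 := sub_ne_zero.mpr (fun e => absurd (hinj e) (by decide))
  have n24 : h 2 - h 4 ≠ 0 := sub_ne_zero.mpr (fun e => absurd (hinj e) (by decide))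
  have n34 : h 3 - h 4 ≠ 0 := sub_ne_zero.mpr (fun e => absurd (hinj e) (by decide))
  have hD : ((h 0 - h 1)*(h 0 - h 2)*(h 0 - h 3)*(h 0 - h 4)*(h 1 - h 2)*(h 1 - h 3)*(h 1 - h 4)*(h 2 - h 3)*(h 2 - h 4)*(h 3 - h 4)) ≠ 0 := by apply_rules [mul_ne_zero, n01, n02, n03, n04, n12, n13, n14, n23, n24, n34]
  have d01 : (Finset.univ \ {0,1} : Finset (Fin 5)) = {2,3,4} := by decide
  have d02 : (Finset.univ \ {0,2} : Finset (Fin 5)) = {1,3,4} := by decide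
  have d03 : (Finset.univ \ {0,3} : Finset (Fin 5)) = {1,2,4} := by decide
  have d04 : (Finset.univ \ {0,4} : Finset (Fin 5)) = {1,2,3} := by decide
  have d12 : (Finset.univ \ {1,2} : Finset (Fin 5)) = {0,3,4} := by decide
  have d13 : (Finset.univ \ {1,3} : Finset (Fin 5)) = {0,2,4} := by decide
  have d14 : (Finset.univ \ {1,4} : Finset (Fin 5)) = {0,2,3} := by decide
  have d23 : (Finset.univ \ {2,3} : Finset (Fin 5)) = {0,1,4} := by decide
  have d24 : (Finset.univ \ {2,4} : Finset (Fin 5)) = {0,1,3} := by decide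
  have d34 : (Finset.univ \ {3,4} : Finset (Fin 5)) = {0,1,2} := by decide
  simp (config := { decide := true }) only [Fin.sum_univ_five, Finset.prod_range_succ,
    Finset.prod_range_zero, d01, d02, d03, d04, d12, d13, d14, d23, d24, d34,
    if_true, if_false, Finset.sum_insert, Finset.prod_insert, Finset.sum_singleton,
    Finset.prod_singleton, Finset.mem_insert, Finset.mem_singleton]
  norm_num
  have hC01 : ((h 2 - h 3)*(h 2 - h 4)*(h 3 - h 4)*(h 0 - h 1)) ≠ 0 := by apply_rules [mul_ne_zero, n01, n02, n03, n04, n12, n13, n14, n23, n24, n34]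
  have tc01 : (((h 0 - h 2) * (h 1 - h 2)) * (((h 0 - h 3) * (h 1 - h 3)) * ((h 0 - h 4) * (h 1 - h 4)))) * ((h 2 - h 3)*(h 2 - h 4)*(h 3 - h 4)*(h 0 - h 1)) = ((h 0 - h 1)*(h 0 - h 2)*(h 0 - h 3)*(h 0 - h 4)*(h 1 - h 2)*(h 1 - h 3)*(h 1 - h 4)*(h 2 - h 3)*(h 2 - h 4)*(h 3 - h 4)) := by ring
  have e01 : 2 * h 1 * (h 0 + h 1) * (2 * h 0) * (h 2 + (h 3 + h 4)) ^ 3 / (((h 0 - h 2) * (h 1 - h 2)) * (((h 0 - h 3) * (h 1 - h 3)) * ((h 0 - h 4) * (h 1 - h 4)))) = ((2 * h 1 * (h 0 + h 1) * (2 * h 0) * (h 2 + (h 3 + h 4)) ^ 3 * ((h 2 - h 3)*(h 2 - h 4)*(h 3 - h 4)*(h 0 - h 1)))) / ((h 0 - h 1)*(h 0 - h 2)*(h 0 - h 3)*(h 0 - h 4)*(h 1 - h 2)*(h 1 - h 3)*(h 1 - h 4)*(h 2 - h 3)*(h 2 - h 4)*(h 3 - h 4)) := by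
    rw [← mul_div_mul_right (2 * h 1 * (h 0 + h 1) * (2 * h 0) * (h 2 + (h 3 + h 4)) ^ 3) (((h 0 - h 2) * (h 1 - h 2)) * (((h 0 - h 3) * (h 1 - h 3)) * ((h 0 - h 4) * (h 1 - h 4)))) hC01]
    rw [tc01]
  have hC02 : ((h 1 - h 3)*(h 1 - h 4)*(h 3 - h 4)*(h 0 - h 2)) ≠ 0 := by apply_rules [mul_ne_zero, n01, n02, n03, n04, n12, n13, n14, n23, n24, n34]
  have tc02 : (((h 0 - h 1) * (h 2 - h 1)) * (((h 0 - h 3) * (h 2 - h 3)) * ((h 0 - h 4) * (h 2 - h 4)))) * ((h 1 - h 3)*(h 1 - h 4)*(h 3 - h 4)*(h 0 - h 2)) = -((h 0 - h 1)*(h 0 - h 2)*(h 0 - h 3)*(h 0 - h 4)*(h 1 - h 2)*(h 1 - h 3)*(h 1 - h 4)*(h 2 - h 3)*(h 2 - h 4)*(h 3 - h 4)) := by ring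
  have e02 : 2 * h 2 * (h 0 + h 2) * (2 * h 0) * (h 1 + (h 3 + h 4)) ^ 3 / (((h 0 - h 1) * (h 2 - h 1)) * (((h 0 - h 3) * (h 2 - h 3)) * ((h 0 - h 4) * (h 2 - h 4)))) = (-(2 * h 2 * (h 0 + h 2) * (2 * h 0) * (h 1 + (h 3 + h 4)) ^ 3 * ((h 1 - h 3)*(h 1 - h 4)*(h 3 - h 4)*(h 0 - h 2)))) / ((h 0 - h 1)*(h 0 - h 2)*(h 0 - h 3)*(h 0 - h 4)*(h 1 - h 2)*(h 1 - h 3)*(h 1 - h 4)*(h 2 - h 3)*(h 2 - h 4)*(h 3 - h 4)) := by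
    rw [← mul_div_mul_right (2 * h 2 * (h 0 + h 2) * (2 * h 0) * (h 1 + (h 3 + h 4)) ^ 3) (((h 0 - h 1) * (h 2 - h 1)) * (((h 0 - h 3) * (h 2 - h 3)) * ((h 0 - h 4) * (h 2 - h 4)))) hC02]
    rw [tc02, div_neg, ← neg_div]
  have hC03 : ((h 1 - h 2)*(h 1 - h 4)*(h 2 - h 4)*(h 0 - h 3)) ≠ 0 := by apply_rules [mul_ne_zero, n01, n02, n03, n04, n12, n13, n14, n23, n24, n34]
  have tc03 : (((h 0 - h 1) * (h 3 - h 1)) * (((h 0 - h 2) * (h 3 - h 2)) * ((h 0 - h 4) * (h 3 - h 4)))) * ((h 1 - h 2)*(h 1 - h 4)*(h 2 - h 4)*(h 0 - h 3)) = ((h 0 - h 1)*(h 0 - h 2)*(h 0 - h 3)*(h 0 - h 4)*(h 1 - h 2)*(h 1 - h 3)*(h 1 - h 4)*(h 2 - h 3)*(h 2 - h 4)*(h 3 - h 4)) := by ring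
  have e03 : 2 * h 3 * (h 0 + h 3) * (2 * h 0) * (h 1 + (h 2 + h 4)) ^ 3 / (((h 0 - h 1) * (h 3 - h 1)) * (((h 0 - h 2) * (h 3 - h 2)) * ((h 0 - h 4) * (h 3 - h 4)))) = ((2 * h 3 * (h 0 + h 3) * (2 * h 0) * (h 1 + (h 2 + h 4)) ^ 3 * ((h 1 - h 2)*(h 1 - h 4)*(h 2 - h 4)*(h 0 - h 3)))) / ((h 0 - h 1)*(h 0 - h 2)*(h 0 - h 3)*(h 0 - h 4)*(h 1 - h 2)*(h 1 - h 3)*(h 1 - h 4)*(h 2 - h 3)*(h 2 - h 4)*(h 3 - h 4)) := by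
    rw [← mul_div_mul_right (2 * h 3 * (h 0 + h 3) * (2 * h 0) * (h 1 + (h 2 + h 4)) ^ 3) (((h 0 - h 1) * (h 3 - h 1)) * (((h 0 - h 2) * (h 3 - h 2)) * ((h 0 - h 4) * (h 3 - h 4)))) hC03]
    rw [tc03]
  have hC04 : ((h 1 - h 2)*(h 1 - h 3)*(h 2 - h 3)*(h 0 - h 4)) ≠ 0 := by apply_rules [mul_ne_zero, n01, n02, n03, n04, n12, n13, n14, n23, n24, n34]
  have tc04 : (((h 0 - h 1) * (h 4 - h 1)) * (((h 0 - h 2) * (h 4 - h 2)) * ((h 0 - h 3) * (h 4 - h 3)))) * ((h 1 - h 2)*(h 1 - h 3)*(h 2 - h 3)*(h 0 - h 4)) = -((h 0 - h 1)*(h 0 - h 2)*(h 0 - h 3)*(h 0 - h 4)*(h 1 - h 2)*(h 1 - h 3)*(h 1 - h 4)*(h 2 - h 3)*(h 2 - h 4)*(h 3 - h 4)) := by ring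
  have e04 : 2 * h 4 * (h 0 + h 4) * (2 * h 0) * (h 1 + (h 2 + h 3)) ^ 3 / (((h 0 - h 1) * (h 4 - h 1)) * (((h 0 - h 2) * (h 4 - h 2)) * ((h 0 - h 3) * (h 4 - h 3)))) = (-(2 * h 4 * (h 0 + h 4) * (2 * h 0) * (h 1 + (h 2 + h 3)) ^ 3 * ((h 1 - h 2)*(h 1 - h 3)*(h 2 - h 3)*(h 0 - h 4)))) / ((h 0 - h 1)*(h 0 - h 2)*(h 0 - h 3)*(h 0 - h 4)*(h 1 - h 2)*(h 1 - h 3)*(h 1 - h 4)*(h 2 - h 3)*(h 2 - h 4)*(h 3 - h 4)) := by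
    rw [← mul_div_mul_right (2 * h 4 * (h 0 + h 4) * (2 * h 0) * (h 1 + (h 2 + h 3)) ^ 3) (((h 0 - h 1) * (h 4 - h 1)) * (((h 0 - h 2) * (h 4 - h 2)) * ((h 0 - h 3) * (h 4 - h 3)))) hC04]
    rw [tc04, div_neg, ← neg_div]
  have hC12 : ((h 0 - h 3)*(h 0 - h 4)*(h 3 - h 4)*(h 1 - h 2)) ≠ 0 := by apply_rules [mul_ne_zero, n01, n02, n03, n04, n12, n13, n14, n23, n24, n34]
  have tc12 : (((h 1 - h 0) * (h 2 - h 0)) * (((h 1 - h 3) * (h 2 - h 3)) * ((h 1 - h 4) * (h 2 - h 4)))) * ((h 0 - h 3)*(h 0 - h 4)*(h 3 - h 4)*(h 1 - h 2)) = ((h 0 - h 1)*(h 0 - h 2)*(h 0 - h 3)*(h 0 - h 4)*(h 1 - h 2)*(h 1 - h 3)*(h 1 - h 4)*(h 2 - h 3)*(h 2 - h 4)*(h 3 - h 4)) := by ring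
  have e12 : 2 * h 2 * (h 1 + h 2) * (2 * h 1) * (h 0 + (h 3 + h 4)) ^ 3 / (((h 1 - h 0) * (h 2 - h 0)) * (((h 1 - h 3) * (h 2 - h 3)) * ((h 1 - h 4) * (h 2 - h 4)))) = ((2 * h 2 * (h 1 + h 2) * (2 * h 1) * (h 0 + (h 3 + h 4)) ^ 3 * ((h 0 - h 3)*(h 0 - h 4)*(h 3 - h 4)*(h 1 - h 2)))) / ((h 0 - h 1)*(h 0 - h 2)*(h 0 - h 3)*(h 0 - h 4)*(h 1 - h 2)*(h 1 - h 3)*(h 1 - h 4)*(h 2 - h 3)*(h 2 - h 4)*(h 3 - h 4)) := by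
    rw [← mul_div_mul_right (2 * h 2 * (h 1 + h 2) * (2 * h 1) * (h 0 + (h 3 + h 4)) ^ 3) (((h 1 - h 0) * (h 2 - h 0)) * (((h 1 - h 3) * (h 2 - h 3)) * ((h 1 - h 4) * (h 2 - h 4)))) hC12]
    rw [tc12]
  have hC13 : ((h 0 - h 2)*(h 0 - h 4)*(h 2 - h 4)*(h 1 - h 3)) ≠ 0 := by apply_rules [mul_ne_zero, n01, n02, n03, n04, n12, n13, n14, n23, n24, n34]
  have tc13 : (((h 1 - h 0) * (h 3 - h 0)) * (((h 1 - h 2) * (h 3 - h 2)) * ((h 1 - h 4) * (h 3 - h 4)))) * ((h 0 - h 2)*(h 0 - h 4)*(h 2 - h 4)*(h 1 - h 3)) = -((h 0 - h 1)*(h 0 - h 2)*(h 0 - h 3)*(h 0 - h 4)*(h 1 - h 2)*(h 1 - h 3)*(h 1 - h 4)*(h 2 - h 3)*(h 2 - h 4)*(h 3 - h 4)) := by ring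
  have e13 : 2 * h 3 * (h 1 + h 3) * (2 * h 1) * (h 0 + (h 2 + h 4)) ^ 3 / (((h 1 - h 0) * (h 3 - h 0)) * (((h 1 - h 2) * (h 3 - h 2)) * ((h 1 - h 4) * (h 3 - h 4)))) = (-(2 * h 3 * (h 1 + h 3) * (2 * h 1) * (h 0 + (h 2 + h 4)) ^ 3 * ((h 0 - h 2)*(h 0 - h 4)*(h 2 - h 4)*(h 1 - h 3)))) / ((h 0 - h 1)*(h 0 - h 2)*(h 0 - h 3)*(h 0 - h 4)*(h 1 - h 2)*(h 1 - h 3)*(h 1 - h 4)*(h 2 - h 3)*(h 2 - h 4)*(h 3 - h 4)) := by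
    rw [← mul_div_mul_right (2 * h 3 * (h 1 + h 3) * (2 * h 1) * (h 0 + (h 2 + h 4)) ^ 3) (((h 1 - h 0) * (h 3 - h 0)) * (((h 1 - h 2) * (h 3 - h 2)) * ((h 1 - h 4) * (h 3 - h 4)))) hC13]
    rw [tc13, div_neg, ← neg_div]
  have hC14 : ((h 0 - h 2)*(h 0 - h 3)*(h 2 - h 3)*(h 1 - h 4)) ≠ 0 := by apply_rules [mul_ne_zero, n01, n02, n03, n04, n12, n13, n14, n23, n24, n34]
  have tc14 : (((h 1 - h 0) * (h 4 - h 0)) * (((h 1 - h 2) * (h 4 - h 2)) * ((h 1 - h 3) * (h 4 - h 3)))) * ((h 0 - h 2)*(h 0 - h 3)*(h 2 - h 3)*(h 1 - h 4)) = ((h 0 - h 1)*(h 0 - h 2)*(h 0 - h 3)*(h 0 - h 4)*(h 1 - h 2)*(h 1 - h 3)*(h 1 - h 4)*(h 2 - h 3)*(h 2 - h 4)*(h 3 - h 4)) := by ring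
  have e14 : 2 * h 4 * (h 1 + h 4) * (2 * h 1) * (h 0 + (h 2 + h 3)) ^ 3 / (((h 1 - h 0) * (h 4 - h 0)) * (((h 1 - h 2) * (h 4 - h 2)) * ((h 1 - h 3) * (h 4 - h 3)))) = ((2 * h 4 * (h 1 + h 4) * (2 * h 1) * (h 0 + (h 2 + h 3)) ^ 3 * ((h 0 - h 2)*(h 0 - h 3)*(h 2 - h 3)*(h 1 - h 4)))) / ((h 0 - h 1)*(h 0 - h 2)*(h 0 - h 3)*(h 0 - h 4)*(h 1 - h 2)*(h 1 - h 3)*(h 1 - h 4)*(h 2 - h 3)*(h 2 - h 4)*(h 3 - h 4)) := by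
    rw [← mul_div_mul_right (2 * h 4 * (h 1 + h 4) * (2 * h 1) * (h 0 + (h 2 + h 3)) ^ 3) (((h 1 - h 0) * (h 4 - h 0)) * (((h 1 - h 2) * (h 4 - h 2)) * ((h 1 - h 3) * (h 4 - h 3)))) hC14]
    rw [tc14]
  have hC23 : ((h 0 - h 1)*(h 0 - h 4)*(h 1 - h 4)*(h 2 - h 3)) ≠ 0 := by apply_rules [mul_ne_zero, n01, n02, n03, n04, n12, n13, n14, n23, n24, n34]
  have tc23 : (((h 2 - h 0) * (h 3 - h 0)) * (((h 2 - h 1) * (h 3 - h 1)) * ((h 2 - h 4) * (h 3 - h 4)))) * ((h 0 - h 1)*(h 0 - h 4)*(h 1 - h 4)*(h 2 - h 3)) = ((h 0 - h 1)*(h 0 - h 2)*(h 0 - h 3)*(h 0 - h 4)*(h 1 - h 2)*(h 1 - h 3)*(h 1 - h 4)*(h 2 - h 3)*(h 2 - h 4)*(h 3 - h 4)) := by ring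
  have e23 : 2 * h 3 * (h 2 + h 3) * (2 * h 2) * (h 0 + (h 1 + h 4)) ^ 3 / (((h 2 - h 0) * (h 3 - h 0)) * (((h 2 - h 1) * (h 3 - h 1)) * ((h 2 - h 4) * (h 3 - h 4)))) = ((2 * h 3 * (h 2 + h 3) * (2 * h 2) * (h 0 + (h 1 + h 4)) ^ 3 * ((h 0 - h 1)*(h 0 - h 4)*(h 1 - h 4)*(h 2 - h 3)))) / ((h 0 - h 1)*(h 0 - h 2)*(h 0 - h 3)*(h 0 - h 4)*(h 1 - h 2)*(h 1 - h 3)*(h 1 - h 4)*(h 2 - h 3)*(h 2 - h 4)*(h 3 - h 4)) := by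
    rw [← mul_div_mul_right (2 * h 3 * (h 2 + h 3) * (2 * h 2) * (h 0 + (h 1 + h 4)) ^ 3) (((h 2 - h 0) * (h 3 - h 0)) * (((h 2 - h 1) * (h 3 - h 1)) * ((h 2 - h 4) * (h 3 - h 4)))) hC23]
    rw [tc23]
  have hC24 : ((h 0 - h 1)*(h 0 - h 3)*(h 1 - h 3)*(h 2 - h 4)) ≠ 0 := by apply_rules [mul_ne_zero, n01, n02, n03, n04, n12, n13, n14, n23, n24, n34]
  have tc24 : (((h 2 - h 0) * (h 4 - h 0)) * (((h 2 - h 1) * (h 4 - h 1)) * ((h 2 - h 3) * (h 4 - h 3)))) * ((h 0 - h 1)*(h 0 - h 3)*(h 1 - h 3)*(h 2 - h 4)) = -((h 0 - h 1)*(h 0 - h 2)*(h 0 - h 3)*(h 0 - h 4)*(h 1 - h 2)*(h 1 - h 3)*(h 1 - h 4)*(h 2 - h 3)*(h 2 - h 4)*(h 3 - h 4)) := by ring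
  have e24 : 2 * h 4 * (h 2 + h 4) * (2 * h 2) * (h 0 + (h 1 + h 3)) ^ 3 / (((h 2 - h 0) * (h 4 - h 0)) * (((h 2 - h 1) * (h 4 - h 1)) * ((h 2 - h 3) * (h 4 - h 3)))) = (-(2 * h 4 * (h 2 + h 4) * (2 * h 2) * (h 0 + (h 1 + h 3)) ^ 3 * ((h 0 - h 1)*(h 0 - h 3)*(h 1 - h 3)*(h 2 - h 4)))) / ((h 0 - h 1)*(h 0 - h 2)*(h 0 - h 3)*(h 0 - h 4)*(h 1 - h 2)*(h 1 - h 3)*(h 1 - h 4)*(h 2 - h 3)*(h 2 - h 4)*(h 3 - h 4)) := by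
    rw [← mul_div_mul_right (2 * h 4 * (h 2 + h 4) * (2 * h 2) * (h 0 + (h 1 + h 3)) ^ 3) (((h 2 - h 0) * (h 4 - h 0)) * (((h 2 - h 1) * (h 4 - h 1)) * ((h 2 - h 3) * (h 4 - h 3)))) hC24]
    rw [tc24, div_neg, ← neg_div]
  have hC34 : ((h 0 - h 1)*(h 0 - h 2)*(h 1 - h 2)*(h 3 - h 4)) ≠ 0 := by apply_rules [mul_ne_zero, n01, n02, n03, n04, n12, n13, n14, n23, n24, n34]
  have tc34 : (((h 3 - h 0) * (h 4 - h 0)) * (((h 3 - h 1) * (h 4 - h 1)) * ((h 3 - h 2) * (h 4 - h 2)))) * ((h 0 - h 1)*(h 0 - h 2)*(h 1 - h 2)*(h 3 - h 4)) = ((h 0 - h 1)*(h 0 - h 2)*(h 0 - h 3)*(h 0 - h 4)*(h 1 - h 2)*(h 1 - h 3)*(h 1 - h 4)*(h 2 - h 3)*(h 2 - h 4)*(h 3 - h 4)) := by ring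
  have e34 : 2 * h 4 * (h 3 + h 4) * (2 * h 3) * (h 0 + (h 1 + h 2)) ^ 3 / (((h 3 - h 0) * (h 4 - h 0)) * (((h 3 - h 1) * (h 4 - h 1)) * ((h 3 - h 2) * (h 4 - h 2)))) = ((2 * h 4 * (h 3 + h 4) * (2 * h 3) * (h 0 + (h 1 + h 2)) ^ 3 * ((h 0 - h 1)*(h 0 - h 2)*(h 1 - h 2)*(h 3 - h 4)))) / ((h 0 - h 1)*(h 0 - h 2)*(h 0 - h 3)*(h 0 - h 4)*(h 1 - h 2)*(h 1 - h 3)*(h 1 - h 4)*(h 2 - h 3)*(h 2 - h 4)*(h 3 - h 4)) := by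
    rw [← mul_div_mul_right (2 * h 4 * (h 3 + h 4) * (2 * h 3) * (h 0 + (h 1 + h 2)) ^ 3) (((h 3 - h 0) * (h 4 - h 0)) * (((h 3 - h 1) * (h 4 - h 1)) * ((h 3 - h 2) * (h 4 - h 2)))) hC34]
    rw [tc34]
  rw [e01, e02, e03, e04, e12, e13, e14, e23, e24, e34]
  simp only [← neg_div, ← add_div]
  rw [div_eq_iff hD]
  ring
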